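/- Let f : B → A fit into a collection square with left edge g : D → C, bottom p : C ↠ A and top q : D → B. If Φ is an inductive definition on S obtained from f as in the Set Compactness construction, then the class J(Φ,U) = { x ∈ S : there exists a proof w ∈ W(g) with ass(w) ⊆ U and conc(w) = x } is Φ-closed, contains U, and is contained in every Φ-closed subclass of S containing U; hence J(Φ,U) = I(Φ,U). -/
import Mathlib


/-- The W-type associated to `g : D → C`. -/
inductive WT (C D : Type) (g : D → C) : Type
  | sup (c : C) (t : ∀ d : D, g d = c → WT C D g) : WT C D g

/-- `Ψ = {(X, a, b) : (X, a) ∈ Φ, b ∈ X}`. -/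
def PsiT {S : Type} (Φ : Set (Set S × S)) : Type :=
  {t : (Set S × S) × S // t.1 ∈ Φ ∧ t.2 ∈ t.1.1}

/-- The map `f : Ψ → Φ + S` obtained by composing the projection `h : Ψ → Φ`
with the sum inclusion. -/
def fmap {S : Type} (Φ : Set (Set S × S)) (t : PsiT Φ) :
    ({φ : Set S × S // φ ∈ Φ} ⊕ S) :=
  Sum.inl ⟨t.1.1, t.2.1⟩

section
variable {S : Type} {Φ : Set (Set S × S)} {C D : Type} (g : D → C)
  (p : C → ({φ : Set S × S // φ ∈ Φ} ⊕ S)) (q : D → PsiT Φ)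

/-- The conclusion of a tree in `W(g)`. -/
def conc : WT C D g → S
  | .sup c _ => Sum.elim (fun φ => φ.1.2) (fun s => s) (p c)

/-- The set of assumptions of a tree in `W(g)`. -/
def ass : WT C D g → Set S
  | .sup c t =>
      Sum.elim (fun _ => {s | ∃ (d : D) (h : g d = c), s ∈ ass (t d h)})
        (fun s => {s}) (p c)

/-- A tree is a proof if it and all its subtrees are well-formed: whenever
`p c = (X, a) ∈ Φ`, the conclusion of `t d` is the third component of `q d`. -/
def isProof : WT C D g → Prop
  | .sup c t =>
      (∀ φ : {φ : Set S × S // φ ∈ Φ}, p c = Sum.inl φ →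
        ∀ (d : D) (h : g d = c), conc g p (t d h) = (q d).1.2) ∧
      ∀ (d : D) (h : g d = c), isProof (t d h)

end

/-- `A` is `Φ`-closed. -/
def PhiClosed {S : Type} (Φ : Set (Set S × S)) (A : Set S) : Prop :=
  ∀ (X : Set S) (a : S), (X, a) ∈ Φ → X ⊆ A → a ∈ A

/-- given a collection square over `f : Ψ → Φ + S` with left
edge `g`, bottom `p` and top `q`, the class
`J(Φ,U) = {x : ∃ proof w with ass(w) ⊆ U and conc(w) = x}` is `Φ`-closed,
contains `U`, and is contained in every `Φ`-closed subclass containing `U`;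
hence it is the least such class `I(Φ, U)`. -/
theorem stmt_10 {S : Type} (Φ : Set (Set S × S)) {C D : Type}
    (g : D → C) (p : C → ({φ : Set S × S // φ ∈ Φ} ⊕ S)) (q : D → PsiT Φ)
    -- the square commutes:
    (hcomm : ∀ d : D, fmap Φ (q d) = p (g d))
    -- `p` is a cover and the inscribed map to the pullback is a cover:
    (hpsurj : Function.Surjective p)
    (hpb : ∀ (ψ : PsiT Φ) (c : C), fmap Φ ψ = p c → ∃ d, q d = ψ ∧ g d = c)
    -- the collection condition:
    (hcoll : ∀ (x : {φ : Set S × S // φ ∈ Φ} ⊕ S) (E : Type)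
      (e : E → {ψ : PsiT Φ // fmap Φ ψ = x}), Function.Surjective e →
      ∃ c : C, p c = x ∧ ∃ h : {d : D // g d = c} → E,
        ∀ d : {d : D // g d = c}, ((e (h d)) : {ψ : PsiT Φ // fmap Φ ψ = x}).1 = q d.1)
    (U : Set S) :
    PhiClosed Φ {x | ∃ w : WT C D g, isProof g p q w ∧ ass g p w ⊆ U ∧ conc g p w = x} ∧
    U ⊆ {x | ∃ w : WT C D g, isProof g p q w ∧ ass g p w ⊆ U ∧ conc g p w = x} ∧
    (∀ A : Set S, PhiClosed Φ A → U ⊆ A →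
      {x | ∃ w : WT C D g, isProof g p q w ∧ ass g p w ⊆ U ∧ conc g p w = x} ⊆ A) := by
  
  classical
  set J : Set S := {x | ∃ w : WT C D g, isProof g p q w ∧ ass g p w ⊆ U ∧ conc g p w = x}
    with hJ
  refine ⟨?_, ?_, ?_⟩
  · -- Φ-closed
    intro X a hXa hXJ
    -- choose proofs for each b ∈ X
    have hch : ∀ b : {b // b ∈ X}, ∃ w : WT C D g,
        isProof g p q w ∧ ass g p w ⊆ U ∧ conc g p w = b.1 := fun b => hXJ b.2
    choose w hw1 hw2 hw3 using hch
    -- apply collection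
    set x : ({φ : Set S × S // φ ∈ Φ} ⊕ S) := Sum.inl ⟨(X, a), hXa⟩ with hx
    have esurj : Function.Surjective
        (fun b : {b // b ∈ X} =>
          (⟨⟨((X, a), b.1), ⟨hXa, b.2⟩⟩, rfl⟩ : {ψ : PsiT Φ // fmap Φ ψ = x})) := by
      rintro ⟨⟨⟨⟨X', a'⟩, b⟩, ⟨hmem, hb⟩⟩, hfm⟩
      simp only [fmap, hx, Sum.inl.injEq, Subtype.mk.injEq, Prod.mk.injEq] at hfm
      obtain ⟨hX', ha'⟩ := hfm
      subst hX'; subst ha'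
      exact ⟨⟨b, hb⟩, rfl⟩
    obtain ⟨c, hpc, h, hh⟩ := hcoll x _ _ esurj
    refine ⟨WT.sup c (fun d hd => w (h ⟨d, hd⟩)), ?_, ?_, ?_⟩
    · constructor
      · intro φ hφ d hd
        have hq : (q d).1 = ((X, a), (h ⟨d, hd⟩).1) :=
          congrArg (fun ψ : PsiT Φ => ψ.1) (hh ⟨d, hd⟩).symm
        rw [hw3, hq]
      · intro d hd; exact hw1 _
    · intro s hs
      simp only [ass, hpc, hx, Sum.elim_inl, Set.mem_setOf_eq] at hs
      obtain ⟨d, hd, hs⟩ := hs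
      exact hw2 _ hs
    · simp only [conc, hpc, hx, Sum.elim_inl]
  · -- U ⊆ J
    intro u hu
    obtain ⟨c, hc⟩ := hpsurj (Sum.inr u)
    have hempty : ∀ d : D, g d ≠ c := by
      intro d hd
      have := hcomm d
      rw [hd, hc] at this
      simp [fmap] at this
    refine ⟨WT.sup c (fun d hd => absurd hd (hempty d)), ?_, ?_, ?_⟩
    · exact ⟨fun φ hφ d hd => absurd hd (hempty d), fun d hd => absurd hd (hempty d)⟩
    · intro s hs
      simp only [ass, hc, Sum.elim_inr, Set.mem_singleton_iff] at hs
      subst hs; exact hu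
    · simp [conc, hc]
  · -- minimality
    intro A hA hUA x hx
    obtain ⟨w, hpf, hass, hconc⟩ := hx
    subst hconc
    clear hJ
    induction w with
    | sup c t ih =>
      obtain ⟨hwf, hsub⟩ := hpf
      cases hpc : p c with
      | inr s =>
        have : s ∈ U := by
          have : s ∈ ass g p (WT.sup c t) := by
            simp [ass, hpc]
          exact hass this
        simpa [conc, hpc] using hUA this
      | inl φ =>
        obtain ⟨⟨X, a⟩, hXa⟩ := φ
        simp only [conc, hpc, Sum.elim_inl]
        apply hA X a hXa
        intro b hb
        have hfm : fmap Φ ⟨((X, a), b), ⟨hXa, hb⟩⟩ = p c := by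
          rw [hpc]; rfl
        obtain ⟨d, hqd, hgd⟩ := hpb _ _ hfm
        have hcb : conc g p (t d hgd) = b := by
          have := hwf ⟨(X, a), hXa⟩ hpc d hgd
          rw [this, hqd]
        have hassb : ass g p (t d hgd) ⊆ U := by
          intro s hs
          apply hass
          simp only [ass, hpc, Sum.elim_inl, Set.mem_setOf_eq]
          exact ⟨d, hgd, hs⟩
        rw [← hcb]
        exact ih d hgd (hsub d hgd) hassb
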